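/- For p, q > 1 with 1/p + 1/q = 1, the convex conjugate (Young–Fenchel transform) of φ_p equals φ_q, i.e. sup_{x∈ℝ} (xy − φ_p(x)) = φ_q(y) for every y ∈ ℝ. -/

import Mathlib

open MeasureTheory Real Filter

noncomputable def phi (p x : ℝ) : ℝ :=
  if |x| ≤ 1 then x ^ 2 / 2 else |x| ^ p / p - 1 / p + 1 / 2

lemma key_ineq (p q : ℝ) (hp : 1 < p) (hq : 1 < q) (hpq : 1 / p + 1 / q = 1) (x y : ℝ) :
    x * y - phi p x ≤ phi q y := by
  have hpq' : p.HolderConjugate q := Real.holderConjugate_iff.mpr ⟨hp, by rw [← one_div, ← one_div]; exact hpq⟩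
  have hxy : x * y ≤ |x| * |y| := by
    calc x * y ≤ |x * y| := le_abs_self _
    _ = |x| * |y| := abs_mul x y
  have hp0 : (0:ℝ) < p := by linarith
  have hq0 : (0:ℝ) < q := by linarith
  unfold phi
  split_ifs with h1 h2 h2
  · nlinarith [sq_nonneg (x - y), sq_abs x, sq_abs y]
  · -- |x| ≤ 1, |y| > 1
    push_neg at h2
    have hy : |y| ≤ 1 / p + |y| ^ q / q := by
      have := Real.young_inequality_of_nonneg (le_of_lt (by linarith : (0:ℝ) < 1))
        (abs_nonneg y) hpq'
      simpa using this
    have h3 : |x| * |y| - |x| ^ 2 / 2 ≤ |y| - 1 / 2 := by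
      nlinarith [abs_nonneg x, abs_nonneg y]
    have hpq2 : 1 / p - 1 / 2 = 1 / 2 - 1 / q := by linarith
    nlinarith [sq_abs x]
  · -- |x| > 1, |y| ≤ 1
    push_neg at h1
    have hxx : |x| ≤ 1 / q + |x| ^ p / p := by
      have := Real.young_inequality_of_nonneg (abs_nonneg x)
        (le_of_lt (by linarith : (0:ℝ) < 1)) hpq'
      simp only [Real.one_rpow, mul_one] at this
      linarith
    have h3 : |x| * |y| - |y| ^ 2 / 2 ≤ |x| - 1 / 2 := by
      nlinarith [abs_nonneg x, abs_nonneg y]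
    have hpq2 : 1 / q - 1 / 2 = 1 / 2 - 1 / p := by linarith
    nlinarith [sq_abs y]
  · -- both > 1
    have := Real.young_inequality_of_nonneg (abs_nonneg x) (abs_nonneg y) hpq'
    linarith

lemma attained (p q : ℝ) (hp : 1 < p) (hq : 1 < q) (hpq : 1 / p + 1 / q = 1) (y : ℝ) :
    ∃ x : ℝ, x * y - phi p x = phi q y := by
  have hp0 : (0:ℝ) < p := by linarith
  have hq0 : (0:ℝ) < q := by linarith
  by_cases hy : |y| ≤ 1
  · refine ⟨y, ?_⟩
    unfold phi
    rw [if_pos hy, if_pos hy]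
    ring
  · push_neg at hy
    have hy0 : (0:ℝ) < |y| := by linarith
    set t : ℝ := |y| ^ (q - 1) with ht
    have ht1 : 1 < t := Real.one_lt_rpow_iff_of_pos hy0 |>.mpr (Or.inl ⟨hy, by linarith⟩)
    have ht0 : 0 < t := by linarith
    refine ⟨if 0 ≤ y then t else -t, ?_⟩
    have habs : |if 0 ≤ y then t else -t| = t := by
      split_ifs <;> simp [abs_of_pos ht0]
    have hmul : (if 0 ≤ y then t else -t) * y = t * |y| := by
      split_ifs with h
      · rw [abs_of_nonneg h]
      · push_neg at h
        rw [abs_of_neg h]; ring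
    have htq : t * |y| = |y| ^ q := by
      rw [ht]
      nth_rewrite 2 [← Real.rpow_one |y|]
      rw [← Real.rpow_add hy0]
      ring_nf
    have htp : t ^ p = |y| ^ q := by
      rw [ht, ← Real.rpow_mul (le_of_lt hy0)]
      congr 1
      field_simp at hpq ⊢
      nlinarith [hpq]
    unfold phi
    rw [habs, if_neg (not_le.mpr ht1), if_neg (not_le.mpr hy), hmul, htq, htp]
    have hiq : 1 / p - 1 / 2 = 1 / 2 - 1 / q := by linarith
    have hM : |y| ^ q - |y| ^ q / p = |y| ^ q / q := by
      linear_combination (-(|y| ^ q)) * hpq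
    linarith

theorem stmt_2 (p q : ℝ) (hp : 1 < p) (hq : 1 < q) (hpq : 1 / p + 1 / q = 1) (y : ℝ) :
    (⨆ x : ℝ, x * y - phi p x) = phi q y := by
  have hbdd : BddAbove (Set.range fun x : ℝ => x * y - phi p x) := by
    refine ⟨phi q y, ?_⟩
    rintro _ ⟨x, rfl⟩
    exact key_ineq p q hp hq hpq x y
  obtain ⟨x₀, hx₀⟩ := attained p q hp hq hpq y
  apply le_antisymm
  · exact ciSup_le fun x => key_ineq p q hp hq hpq x y
  · rw [← hx₀]
    exact le_ciSup hbdd x₀
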